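/- Let g be a Lie algebra, V a finite-dimensional g-module, and r ∈ Λ²g a skew-symmetric solution of the classical Yang–Baxter equation. Then δ(x) = [r, x ⊗ 1 + 1 ⊗ x] for x ∈ g ⋉ V defines a semidirect Lie bialgebra structure on the semidirect product g ⋉ V; in particular g is a Lie sub-bialgebra and δ(V) ⊆ V ∧ g. -/

import Mathlib

/- STATEMENT 3: Let g be a Lie algebra, V a finite-dimensional g-module, and
r ∈ Λ²g a skew-symmetric solution of the classical Yang–Baxter equation.
Then δ(x) = [r, x⊗1 + 1⊗x] defines a semidirect Lie bialgebra structure on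
the semidirect product g ⋉ V; in particular g is a Lie sub-bialgebra and
δ(V) ⊆ V ∧ g.  (The semidirect product is presented as a Lie algebra `L`
containing `g` as a Lie subalgebra and `V` as a complementary abelian ideal.) -/

open TensorProduct

variable (k : Type*) [Field k] [CharZero k]
variable (L : Type*) [LieRing L] [LieAlgebra k L]

attribute [local instance] LieRing.ofAssociativeRing

/-- The Lie bracket of `L` as a linear map `L →ₗ End L`. -/
noncomputable def lieBr : L →ₗ[k] Module.End k L := (LieAlgebra.ad k L).toLinearMap

/-- The Lie bracket as a linear map on the tensor square. -/
noncomputable def liftBr : L ⊗[k] L →ₗ[k] L := TensorProduct.lift (lieBr k L)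

/-- `(a⊗b)⊗(c⊗d) ↦ ⁅a,c⁆⊗b⊗d`, i.e. `φ⊗ψ ↦ [φ₁₂, ψ₁₃]` for `φ,ψ ∈ g⊗g ⊆ U(g)⊗U(g)`. -/
noncomputable def t1 : (L ⊗[k] L) ⊗[k] (L ⊗[k] L) →ₗ[k] L ⊗[k] (L ⊗[k] L) :=
  (TensorProduct.map (liftBr k L) LinearMap.id) ∘ₗ
    (TensorProduct.tensorTensorTensorComm k L L L L).toLinearMap

/-- `(a⊗b)⊗(c⊗d) ↦ a⊗⁅b,c⁆⊗d`, i.e. `φ⊗ψ ↦ [φ₁₂, ψ₂₃]`. -/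
noncomputable def t2 : (L ⊗[k] L) ⊗[k] (L ⊗[k] L) →ₗ[k] L ⊗[k] (L ⊗[k] L) :=
  (LinearMap.lTensor L ((LinearMap.rTensor L (liftBr k L)) ∘ₗ
      (TensorProduct.assoc k L L L).symm.toLinearMap)) ∘ₗ
    (TensorProduct.assoc k L L (L ⊗[k] L)).toLinearMap

/-- `(a⊗b)⊗(c⊗d) ↦ a⊗c⊗⁅b,d⁆`, i.e. `φ⊗ψ ↦ [φ₁₃, ψ₂₃]`. -/
noncomputable def t3 : (L ⊗[k] L) ⊗[k] (L ⊗[k] L) →ₗ[k] L ⊗[k] (L ⊗[k] L) :=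
  (LinearMap.lTensor L (LinearMap.lTensor L (liftBr k L))) ∘ₗ
    (TensorProduct.assoc k L L (L ⊗[k] L)).toLinearMap ∘ₗ
    (TensorProduct.tensorTensorTensorComm k L L L L).toLinearMap

/-- The classical Yang–Baxter equation `[r₁₂,r₁₃]+[r₁₂,r₂₃]+[r₁₃,r₂₃] = 0`
(all terms lie in `g⊗g⊗g ⊆ U(g)^{⊗3}`). -/
def IsCYBE (r : L ⊗[k] L) : Prop :=
  t1 k L (r ⊗ₜ r) + t2 k L (r ⊗ₜ r) + t3 k L (r ⊗ₜ r) = 0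

/-- `x ↦ (ad x ⊗ 1 + 1 ⊗ ad x)`, the adjoint action on the tensor square;
`adT x t = [x⊗1 + 1⊗x, t]` in `U(g)⊗U(g)`. -/
noncomputable def adT : L →ₗ[k] (L ⊗[k] L →ₗ[k] L ⊗[k] L) :=
  ((LinearMap.rTensorHom L).comp (lieBr k L)) + ((LinearMap.lTensorHom L).comp (lieBr k L))

/-- `t ∈ g⊗g` is `g`-invariant: `[x⊗1 + 1⊗x, t] = 0` for all `x`. -/
def LieInvariantElem (t : L ⊗[k] L) : Prop := ∀ x : L, adT k L x t = 0

/-- The flip `r^op` of `r`. -/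
noncomputable def rop (r : L ⊗[k] L) : L ⊗[k] L := (TensorProduct.comm k L L) r

/-- The coboundary cobracket `δ(x) = [r, x⊗1 + 1⊗x] = -(ad x ⊗ 1 + 1 ⊗ ad x)(r)`. -/
noncomputable def cob (r : L ⊗[k] L) : L →ₗ[k] L ⊗[k] L :=
  -((LinearMap.applyₗ r) ∘ₗ (adT k L))

/-- The cyclic permutation `a⊗(b⊗c) ↦ b⊗(c⊗a)` on the triple tensor product. -/
noncomputable def cyc : L ⊗[k] (L ⊗[k] L) →ₗ[k] L ⊗[k] (L ⊗[k] L) :=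
  (TensorProduct.assoc k L L L).toLinearMap ∘ₗ (TensorProduct.comm k L (L ⊗[k] L)).toLinearMap

/-- `δ` is co-skew-symmetric, i.e. takes values in `Λ²g ⊆ g⊗g`. -/
def IsCoSkew (D : L →ₗ[k] L ⊗[k] L) : Prop :=
  ∀ x : L, (TensorProduct.comm k L L) (D x) = - D x

/-- The 1-cocycle condition
`δ([x,y]) = [δ(x), y⊗1+1⊗y] + [x⊗1+1⊗x, δ(y)]`. -/
def IsCocycle (D : L →ₗ[k] L ⊗[k] L) : Prop :=
  ∀ x y : L, D ⁅x, y⁆ = adT k L x (D y) - adT k L y (D x)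

/-- The co-Jacobi identity: the cyclic sum of `(1⊗δ)∘δ` vanishes;
equivalently `δ*` is a Lie bracket on `g*`. -/
def IsCoJacobi (D : L →ₗ[k] L ⊗[k] L) : Prop :=
  ∀ x : L,
    (LinearMap.lTensor L D) (D x) + cyc k L ((LinearMap.lTensor L D) (D x)) +
      cyc k L (cyc k L ((LinearMap.lTensor L D) (D x))) = 0

/-- `D` is a Lie bialgebra cobracket on `L`. -/
def IsLieCobracket (D : L →ₗ[k] L ⊗[k] L) : Prop :=
  IsCoSkew k L D ∧ IsCocycle k L D ∧ IsCoJacobi k L D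

/-- For submodules `p q ⊆ L`, the image of `p ⊗ q` in `L ⊗ L`. -/
noncomputable def TP (p q : Submodule k L) : Submodule k (L ⊗[k] L) :=
  LinearMap.range (TensorProduct.map p.subtype q.subtype)

/-! ### Auxiliary machinery for the proof -/

section Aux

@[simp] lemma liftBr_tmul (u v : L) : liftBr k L (u ⊗ₜ[k] v) = ⁅u, v⁆ := by
  simp [liftBr, lieBr]

@[simp] lemma adT_tmul (x u v : L) :
    adT k L x (u ⊗ₜ[k] v) = ⁅x, u⁆ ⊗ₜ[k] v + u ⊗ₜ[k] ⁅x, v⁆ := by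
  simp [adT, lieBr]

lemma cob_apply (r : L ⊗[k] L) (x : L) : cob k L r x = -(adT k L x r) := by
  simp [cob]

@[simp] lemma cyc_tmul (u v w : L) :
    cyc k L (u ⊗ₜ[k] (v ⊗ₜ[k] w)) = v ⊗ₜ[k] (w ⊗ₜ[k] u) := by
  simp [cyc]

@[simp] lemma t1_tmul (a b c d : L) :
    t1 k L ((a ⊗ₜ[k] b) ⊗ₜ[k] (c ⊗ₜ[k] d)) = ⁅a, c⁆ ⊗ₜ[k] (b ⊗ₜ[k] d) := by
  simp [t1]

@[simp] lemma t2_tmul (a b c d : L) :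
    t2 k L ((a ⊗ₜ[k] b) ⊗ₜ[k] (c ⊗ₜ[k] d)) = a ⊗ₜ[k] (⁅b, c⁆ ⊗ₜ[k] d) := by
  simp [t2]

@[simp] lemma t3_tmul (a b c d : L) :
    t3 k L ((a ⊗ₜ[k] b) ⊗ₜ[k] (c ⊗ₜ[k] d)) = a ⊗ₜ[k] (c ⊗ₜ[k] ⁅b, d⁆) := by
  simp [t3]

/-- `(u⊗v)⊗ρ ↦ u ⊗ adT v ρ`. -/
noncomputable def Mmap : (L ⊗[k] L) ⊗[k] (L ⊗[k] L) →ₗ[k] L ⊗[k] (L ⊗[k] L) :=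
  (LinearMap.lTensor L (TensorProduct.lift (adT k L))) ∘ₗ
    (TensorProduct.assoc k L L (L ⊗[k] L)).toLinearMap

@[simp] lemma Mmap_tmul (u v : L) (ρ : L ⊗[k] L) :
    Mmap k L ((u ⊗ₜ[k] v) ⊗ₜ[k] ρ) = u ⊗ₜ[k] (adT k L v ρ) := by
  simp [Mmap]

/-- The quadratic part of `(1 ⊗ δ) ∘ δ` as a linear map in `r ⊗ r`. -/
noncomputable def Sx (x : L) : (L ⊗[k] L) ⊗[k] (L ⊗[k] L) →ₗ[k] L ⊗[k] (L ⊗[k] L) :=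
  (Mmap k L) ∘ₗ (LinearMap.rTensor (L ⊗[k] L) (adT k L x))

/-- The adjoint action of `x` on the triple tensor product. -/
noncomputable def Phi (x : L) : L ⊗[k] (L ⊗[k] L) →ₗ[k] L ⊗[k] (L ⊗[k] L) :=
  LinearMap.rTensor (L ⊗[k] L) (lieBr k L x) + LinearMap.lTensor L (adT k L x)

@[simp] lemma Phi_tmul (x u v w : L) :
    Phi k L x (u ⊗ₜ[k] (v ⊗ₜ[k] w)) =
      ⁅x, u⁆ ⊗ₜ[k] (v ⊗ₜ[k] w) + u ⊗ₜ[k] (⁅x, v⁆ ⊗ₜ[k] w + v ⊗ₜ[k] ⁅x, w⁆) := by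
  simp [Phi, lieBr]

noncomputable def sig1 : (L ⊗[k] L) ⊗[k] (L ⊗[k] L) →ₗ[k] (L ⊗[k] L) ⊗[k] (L ⊗[k] L) :=
  LinearMap.rTensor (L ⊗[k] L) (TensorProduct.comm k L L).toLinearMap

noncomputable def sig2 : (L ⊗[k] L) ⊗[k] (L ⊗[k] L) →ₗ[k] (L ⊗[k] L) ⊗[k] (L ⊗[k] L) :=
  LinearMap.lTensor (L ⊗[k] L) (TensorProduct.comm k L L).toLinearMap

noncomputable def tauM : (L ⊗[k] L) ⊗[k] (L ⊗[k] L) →ₗ[k] (L ⊗[k] L) ⊗[k] (L ⊗[k] L) :=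
  (TensorProduct.comm k (L ⊗[k] L) (L ⊗[k] L)).toLinearMap

/-- The symmetrizer `(1-σ₁)(1-σ₂)(1+τ)`. -/
noncomputable def symMap : (L ⊗[k] L) ⊗[k] (L ⊗[k] L) →ₗ[k] (L ⊗[k] L) ⊗[k] (L ⊗[k] L) :=
  (LinearMap.id - sig1 k L) ∘ₗ (LinearMap.id - sig2 k L) ∘ₗ (LinearMap.id + tauM k L)

lemma symMap_tmul (a b c d : L) :
    symMap k L ((a ⊗ₜ[k] b) ⊗ₜ[k] (c ⊗ₜ[k] d)) =
      (a ⊗ₜ[k] b) ⊗ₜ[k] (c ⊗ₜ[k] d) + (c ⊗ₜ[k] d) ⊗ₜ[k] (a ⊗ₜ[k] b)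
      - (a ⊗ₜ[k] b) ⊗ₜ[k] (d ⊗ₜ[k] c) - (c ⊗ₜ[k] d) ⊗ₜ[k] (b ⊗ₜ[k] a)
      - (b ⊗ₜ[k] a) ⊗ₜ[k] (c ⊗ₜ[k] d) - (d ⊗ₜ[k] c) ⊗ₜ[k] (a ⊗ₜ[k] b)
      + (b ⊗ₜ[k] a) ⊗ₜ[k] (d ⊗ₜ[k] c) + (d ⊗ₜ[k] c) ⊗ₜ[k] (b ⊗ₜ[k] a) := by
  simp [symMap, sig1, sig2, tauM]
  abel

set_option maxRecDepth 40000 in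
set_option maxHeartbeats 4000000 in
/-- The key algebraic identity: on symmetrized tensors, the cyclic sum of the
composite cobracket equals the adjoint action applied to the Yang–Baxter sum. -/
lemma key (x : L) :
    ((LinearMap.id + cyc k L + cyc k L ∘ₗ cyc k L) ∘ₗ Sx k L x) ∘ₗ symMap k L =
      (Phi k L x ∘ₗ (t1 k L + t2 k L + t3 k L)) ∘ₗ symMap k L := by
  apply TensorProduct.ext_fourfold'
  intro a b c d
  have sba : ⁅b, a⁆ = -⁅a, b⁆ := (lie_skew b a).symm
  have sca : ⁅c, a⁆ = -⁅a, c⁆ := (lie_skew c a).symm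
  have scb : ⁅c, b⁆ = -⁅b, c⁆ := (lie_skew c b).symm
  have sda : ⁅d, a⁆ = -⁅a, d⁆ := (lie_skew d a).symm
  have sdb : ⁅d, b⁆ = -⁅b, d⁆ := (lie_skew d b).symm
  have sdc : ⁅d, c⁆ = -⁅c, d⁆ := (lie_skew d c).symm
  have sxa : ⁅x, a⁆ = -⁅a, x⁆ := (lie_skew x a).symm
  have sxb : ⁅x, b⁆ = -⁅b, x⁆ := (lie_skew x b).symm
  have sxc : ⁅x, c⁆ = -⁅c, x⁆ := (lie_skew x c).symm
  have sxd : ⁅x, d⁆ = -⁅d, x⁆ := (lie_skew x d).symm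
  have jac : ∀ p q : L, ⁅x, ⁅p, q⁆⁆ = ⁅q, ⁅p, x⁆⁆ - ⁅p, ⁅q, x⁆⁆ := by
    intro p q
    rw [show ⁅x, ⁅p, q⁆⁆ = -⁅⁅p, q⁆, x⁆ from (lie_skew _ _).symm, lie_lie]
    abel
  simp only [LinearMap.comp_apply, symMap_tmul, LinearMap.add_apply, LinearMap.id_apply,
    map_add, map_sub, map_neg]
  simp only [Sx, Mmap, LinearMap.comp_apply, LinearMap.rTensor_tmul, adT_tmul,
    TensorProduct.add_tmul, TensorProduct.tmul_add, TensorProduct.neg_tmul,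
    TensorProduct.tmul_neg, map_add, map_neg, map_sub, map_smul, LinearEquiv.coe_coe,
    TensorProduct.assoc_tmul, LinearMap.lTensor_tmul, TensorProduct.lift.tmul,
    t1_tmul, t2_tmul, t3_tmul, Phi_tmul, cyc_tmul, lie_lie,
    jac a b, jac a c, jac a d, jac b a, jac b c, jac b d, jac c a, jac c b, jac c d,
    jac d a, jac d b, jac d c,
    sba, sca, scb, sda, sdb, sdc, sxa, sxb, sxc, sxd,
    lie_neg, neg_lie, lie_add, add_lie, lie_sub, sub_lie, lie_self, zero_lie, lie_zero,
    TensorProduct.zero_tmul, TensorProduct.tmul_zero, neg_neg, TensorProduct.sub_tmul, TensorProduct.tmul_sub]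
  abel

end Aux

lemma comm_adT (x : L) (t : L ⊗[k] L) :
    (TensorProduct.comm k L L) (adT k L x t) = adT k L x ((TensorProduct.comm k L L) t) := by
  induction t using TensorProduct.induction_on with
  | zero => simp
  | tmul u v => simp; abel
  | add s t hs ht => simp only [map_add, hs, ht]

lemma adT_bracket (x y : L) (t : L ⊗[k] L) :
    adT k L ⁅x, y⁆ t = adT k L x (adT k L y t) - adT k L y (adT k L x t) := by
  induction t using TensorProduct.induction_on with
  | zero => simp
  | tmul u v =>
      simp [lie_lie, TensorProduct.tmul_sub, TensorProduct.sub_tmul,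
        TensorProduct.tmul_add, TensorProduct.add_tmul]
      abel
  | add s t hs ht => simp only [map_add, hs, ht]; abel

lemma adT_tp (p q p' q' : Submodule k L) (x : L)
    (h1 : ∀ u ∈ p, ⁅x, u⁆ ∈ p') (h2 : ∀ u ∈ q, ⁅x, u⁆ ∈ q') :
    ∀ t ∈ TP k L p q, adT k L x t ∈ TP k L p' q ⊔ TP k L p q' := by
  rintro t ⟨s, rfl⟩
  induction s using TensorProduct.induction_on with
  | zero => simp
  | tmul u v =>
      rw [TensorProduct.map_tmul, adT_tmul]
      refine add_mem (Submodule.mem_sup_left ⟨(⟨⁅x, ↑u⁆, h1 u u.2⟩ : p') ⊗ₜ[k] v, rfl⟩)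
        (Submodule.mem_sup_right ⟨u ⊗ₜ[k] (⟨⁅x, ↑v⁆, h2 v v.2⟩ : q'), rfl⟩)
  | add s t hs ht => rw [map_add, map_add]; exact add_mem hs ht

theorem stmt3 (G : LieSubalgebra k L) (V : Submodule k L) [FiniteDimensional k V]
    (hcompl : IsCompl G.toSubmodule V)
    (habelian : ∀ v ∈ V, ∀ w ∈ V, ⁅v, w⁆ = (0 : L))
    (hideal : ∀ x : L, ∀ v ∈ V, ⁅x, v⁆ ∈ V)
    (r : L ⊗[k] L)
    (hrG : r ∈ TP k L G.toSubmodule G.toSubmodule)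
    (hskew : rop k L r = -r)
    (hCYBE : IsCYBE k L r) :
    IsLieCobracket k L (cob k L r) ∧
      (∀ x ∈ G.toSubmodule, cob k L r x ∈ TP k L G.toSubmodule G.toSubmodule) ∧
      (∀ v ∈ V, cob k L r v ∈
        TP k L V G.toSubmodule ⊔ TP k L G.toSubmodule V) := by
  have hc : (TensorProduct.comm k L L) r = -r := hskew
  refine ⟨⟨?_, ?_, ?_⟩, ?_, ?_⟩
  · -- co-skew
    intro x
    simp [cob_apply, comm_adT, hc]
  · -- cocycle
    intro x y
    simp only [cob_apply, map_neg, adT_bracket]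
    abel
  · -- co-Jacobi
    intro x
    have hMc : ∀ t : L ⊗[k] L, LinearMap.lTensor L (cob k L r) t
        = -(Mmap k L (t ⊗ₜ[k] r)) := by
      intro t
      induction t using TensorProduct.induction_on with
      | zero => simp
      | tmul u v => simp [cob_apply, TensorProduct.tmul_neg]
      | add s t hs ht =>
          simp only [map_add, hs, ht, TensorProduct.add_tmul]
          abel
    have h1 : LinearMap.lTensor L (cob k L r) (cob k L r x) = Sx k L x (r ⊗ₜ[k] r) := by
      rw [hMc, cob_apply]
      simp [Sx, TensorProduct.neg_tmul]
    have h8 : symMap k L (r ⊗ₜ[k] r) = (8 : k) • (r ⊗ₜ[k] r) := by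
      simp [symMap, sig1, sig2, tauM, hc, TensorProduct.tmul_neg, TensorProduct.neg_tmul]
      module
    have hz : t1 k L (r ⊗ₜ[k] r) + t2 k L (r ⊗ₜ[k] r) + t3 k L (r ⊗ₜ[k] r) = 0 := hCYBE
    have hkey := LinearMap.congr_fun (key k L x) (r ⊗ₜ[k] r)
    simp only [LinearMap.comp_apply, LinearMap.add_apply, LinearMap.id_apply, h8,
      map_smul] at hkey
    try simp only [← smul_add] at hkey
    rw [hz, map_zero, smul_zero] at hkey
    have h0 := (smul_eq_zero.mp hkey).resolve_left (by norm_num)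
    rw [h1]
    exact h0
  · -- image of G
    intro x hx
    have hm := adT_tp k L G.toSubmodule G.toSubmodule G.toSubmodule G.toSubmodule x
      (fun u hu => G.lie_mem hx hu) (fun u hu => G.lie_mem hx hu) r hrG
    rw [sup_idem] at hm
    rw [cob_apply]
    exact neg_mem hm
  · -- image of V
    intro v hv
    have h1 : ∀ u ∈ G.toSubmodule, ⁅v, u⁆ ∈ V := by
      intro u hu
      rw [show ⁅v, u⁆ = -⁅u, v⁆ from (lie_skew v u).symm]
      exact V.neg_mem (hideal u v hv)
    have hm := adT_tp k L G.toSubmodule G.toSubmodule V V v h1 h1 r hrG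
    rw [cob_apply]
    exact neg_mem hm
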